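/- If τ ∧ τ' < ∞, then for every real number γ, Σ_{t=0}^{τ∧τ'} (γ·1_O(x_t) − 1_{K∖O}(x_t)) = γ·1_{{τ < τ'}} − (τ ∧ τ'), where 1_{{·}} denotes the indicator of the stated event. -/

import Mathlib

open Set Finset

/-- First hitting time of the set `S` by the sequence `x`, valued in `ℕ∞` (`⊤` if never hit). -/
noncomputable def hitTime {X : Type*} (S : Set X) (x : ℕ → X) : ℕ∞ :=
  sInf ((fun t : ℕ => (t : ℕ∞)) '' {t : ℕ | x t ∈ S})

lemma hitTime_le {X : Type*} {S : Set X} {x : ℕ → X} {t : ℕ} (h : x t ∈ S) :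
    hitTime S x ≤ t := sInf_le ⟨t, h, rfl⟩

lemma not_mem_of_lt_hitTime {X : Type*} {S : Set X} {x : ℕ → X} {t : ℕ}
    (h : (t : ℕ∞) < hitTime S x) : x t ∉ S := fun hm => absurd (hitTime_le hm) (not_le.2 h)

lemma hitTime_mem {X : Type*} {S : Set X} {x : ℕ → X} (h : hitTime S x < ⊤) :
    x ((hitTime S x).toNat) ∈ S ∧ ((hitTime S x).toNat : ℕ∞) = hitTime S x := by
  have hne : ((fun t : ℕ => (t : ℕ∞)) '' {t : ℕ | x t ∈ S}).Nonempty := by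
    by_contra hemp
    rw [Set.not_nonempty_iff_eq_empty] at hemp
    simp [hitTime, hemp] at h
  have := csInf_mem hne
  rw [show sInf ((fun t : ℕ => (t : ℕ∞)) '' {t : ℕ | x t ∈ S}) = hitTime S x from rfl] at this
  obtain ⟨t, ht, heq⟩ := this
  have h2 : (hitTime S x).toNat = t := by rw [← heq]; simp
  rw [h2, ← heq]; exact ⟨ht, rfl⟩

theorem stmt16 {X : Type*} (O K : Set X) (hOK : O ⊆ K) (x : ℕ → X)
    (hfin : min (hitTime O x) (hitTime Kᶜ x) < ⊤) (γ : ℝ) :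
    ∑ t ∈ Finset.range ((min (hitTime O x) (hitTime Kᶜ x)).toNat + 1),
        (γ * O.indicator (1 : X → ℝ) (x t) - (K \ O).indicator (1 : X → ℝ) (x t)) =
      γ * (if hitTime O x < hitTime Kᶜ x then (1 : ℝ) else 0) -
        ((min (hitTime O x) (hitTime Kᶜ x)).toNat : ℝ) := by
  set τ := hitTime O x with hτ
  set τ' := hitTime Kᶜ x with hτ'
  set m := min τ τ' with hm
  set N := m.toNat with hN
  have hmN : (N : ℕ∞) = m := by
    simp [hN, ENat.coe_toNat (ne_of_lt hfin)]
  -- terms before N are -1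
  have hbefore : ∀ t ∈ Finset.range N,
      (γ * O.indicator (1 : X → ℝ) (x t) - (K \ O).indicator (1 : X → ℝ) (x t)) = -1 := by
    intro t ht
    rw [Finset.mem_range] at ht
    have hlt : (t : ℕ∞) < m := by
      rw [← hmN]; exact_mod_cast ht
    have h1 : x t ∉ O := not_mem_of_lt_hitTime (lt_of_lt_of_le hlt (min_le_left _ _))
    have h2 : x t ∉ Kᶜ := not_mem_of_lt_hitTime (lt_of_lt_of_le hlt (min_le_right _ _))
    have hKO : x t ∈ K \ O := ⟨not_not.1 h2, h1⟩
    rw [Set.indicator_of_notMem h1, Set.indicator_of_mem hKO]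
    simp
  rw [Finset.sum_range_succ, Finset.sum_congr rfl hbefore]
  simp only [Finset.sum_const, Finset.card_range, nsmul_eq_mul, mul_neg_one]
  by_cases hlt : τ < τ'
  · -- m = τ, x N ∈ O
    have hmτ : m = τ := min_eq_left hlt.le
    have hmem := hitTime_mem (show τ < ⊤ from hmτ ▸ hfin)
    have hNτ : τ.toNat = N := by rw [hN, hmτ]
    rw [hNτ] at hmem
    have hO : x N ∈ O := hmem.1
    have hnK : x N ∉ K \ O := fun h => h.2 hO
    rw [Set.indicator_of_mem hO, Set.indicator_of_notMem hnK, if_pos hlt]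
    simp [Pi.one_apply]; ring
  · -- m = τ', x N ∈ Kᶜ
    have hmτ : m = τ' := min_eq_right (not_lt.1 hlt)
    have hmem := hitTime_mem (show τ' < ⊤ from hmτ ▸ hfin)
    have hNτ : τ'.toNat = N := by rw [hN, hmτ]
    rw [hNτ] at hmem
    have hKc : x N ∈ Kᶜ := hmem.1
    have hnO : x N ∉ O := fun h => hKc (hOK h)
    have hnKO : x N ∉ K \ O := fun h => hKc h.1
    rw [Set.indicator_of_notMem hnO, Set.indicator_of_notMem hnKO, if_neg hlt]
    ring
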